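/- With the notation of the polar-decomposition setup (𝐓^♯ : L → K₀ bounded, L = (ker T)^⊥, 𝐓̃ = (𝐓^♯)*), the range of 𝐓̃ is dense in L; indeed ran 𝐓̃ ⊇ ran T². -/

import Mathlib

set_option synthInstance.maxHeartbeats 800000
set_option maxHeartbeats 1000000

open ContinuousLinearMap

/-- In the polar-decomposition setup (`Φ = 𝐓^♯ : L → K₀` bounded with dense range,
`L = (ker T)ᗮ`, `‖Φx‖ = ‖Tx‖`, `𝐓̃ = Φ^*`), the range of `𝐓̃` is dense in `L`, and indeed
`ran 𝐓̃ ⊇ ran T²`. -/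
theorem tilde_T_dense_range {H K₀ : Type*} [NormedAddCommGroup H] [InnerProductSpace ℂ H]
    [CompleteSpace H] [NormedAddCommGroup K₀] [InnerProductSpace ℂ K₀] [CompleteSpace K₀]
    (T₁ T₂ T₃ : H →L[ℂ] H)
    (hpos : (T₁ ∘L adjoint T₁ + T₂ ∘L adjoint T₂ - T₃ ∘L adjoint T₃).IsPositive)
    (hcontr : (1 - (T₁ ∘L adjoint T₁ + T₂ ∘L adjoint T₂ - T₃ ∘L adjoint T₃)).IsPositive)
    (T : H →L[ℂ] H)
    (hT : T = CFC.sqrt (T₁ ∘L adjoint T₁ + T₂ ∘L adjoint T₂ - T₃ ∘L adjoint T₃))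
    (Φ : ((LinearMap.ker (T : H →ₗ[ℂ] H))ᗮ : Submodule ℂ H) →L[ℂ] K₀)
    (hΦnorm : ∀ x : (LinearMap.ker (T : H →ₗ[ℂ] H))ᗮ, ‖Φ x‖ = ‖T (x : H)‖)
    (hΦinner : ∀ x y : (LinearMap.ker (T : H →ₗ[ℂ] H))ᗮ,
      (inner ℂ (Φ x) (Φ y) : ℂ) =
        inner ℂ (adjoint T₁ (x : H)) (adjoint T₁ (y : H))
          + inner ℂ (adjoint T₂ (x : H)) (adjoint T₂ (y : H))
          - inner ℂ (adjoint T₃ (x : H)) (adjoint T₃ (y : H)))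
    (hdense : DenseRange Φ) :
    DenseRange (adjoint Φ) ∧
      ∀ x : H, ∃ k : K₀, ((adjoint Φ k : (LinearMap.ker (T : H →ₗ[ℂ] H))ᗮ) : H) = T (T x) := by
  set S := T₁ ∘L adjoint T₁ + T₂ ∘L adjoint T₂ - T₃ ∘L adjoint T₃ with hS
  have hSnn : (0 : H →L[ℂ] H) ≤ S := (nonneg_iff_isPositive S).mpr hpos
  have hTnn : (0 : H →L[ℂ] H) ≤ T := hT ▸ CFC.sqrt_nonneg (a := S)
  have hTpos : T.IsPositive := (nonneg_iff_isPositive T).mp hTnn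
  have hTsa : adjoint T = T := isSelfAdjoint_iff'.mp hTpos.isSelfAdjoint
  have hTsq : ∀ x : H, T (T x) = S x := by
    intro x
    have : T ^ 2 = S := by rw [hT]; exact CFC.sq_sqrt S hSnn
    calc T (T x) = (T ^ 2) x := by rw [sq]; rfl
    _ = S x := by rw [this]
  -- inner product identity
  have key : ∀ x y : (LinearMap.ker (T : H →ₗ[ℂ] H))ᗮ,
      (inner ℂ (Φ x) (Φ y) : ℂ) = inner ℂ (x : H) (T (T (y : H))) := by
    intro x y
    rw [hΦinner, hTsq]
    simp only [hS, adjoint_inner_left, ContinuousLinearMap.sub_apply,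
      ContinuousLinearMap.add_apply, ContinuousLinearMap.comp_apply]
    rw [inner_sub_right, inner_add_right]
  -- range of T lands in (ker T)ᗮ
  have hmem : ∀ w : H, T w ∈ (LinearMap.ker (T : H →ₗ[ℂ] H))ᗮ := by
    intro w
    intro u hu
    have hu' : T u = 0 := hu
    rw [← hTsa, adjoint_inner_right, hu', inner_zero_left]
  -- adjoint Φ (Φ x') = T² x'
  have keyC : ∀ x' : ((LinearMap.ker (T : H →ₗ[ℂ] H))ᗮ : Submodule ℂ H),
      adjoint Φ (Φ x') = ⟨T (T (x' : H)), hmem _⟩ := by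
    intro x'
    apply ext_inner_right ℂ
    intro z
    rw [adjoint_inner_left, key]
    rw [Submodule.coe_inner]
    calc (inner ℂ (x' : H) (T (T (z : H))) : ℂ)
        = inner ℂ (adjoint T (adjoint T (x' : H))) (z : H) := by
          rw [← adjoint_inner_left, ← adjoint_inner_left]
      _ = inner ℂ (T (T (x' : H))) (z : H) := by rw [hTsa]
  haveI : CompleteSpace (LinearMap.ker (T : H →ₗ[ℂ] H)) :=
    (ContinuousLinearMap.isClosed_ker T).completeSpace_coe
  constructor
  · -- dense range
    have htop : (LinearMap.range (adjoint Φ : K₀ →ₗ[ℂ] (LinearMap.ker (T : H →ₗ[ℂ] H))ᗮ)).topologicalClosure = ⊤ := by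
      rw [Submodule.topologicalClosure_eq_top_iff, Submodule.eq_bot_iff]
      intro y hy
      have hΦy : Φ y = 0 := by
        have := hy (adjoint Φ (Φ y)) ⟨Φ y, rfl⟩
        rw [adjoint_inner_left] at this
        exact inner_self_eq_zero.mp this
      have hTy : T (y : H) = 0 := by
        have := hΦnorm y
        rw [hΦy, norm_zero] at this
        exact norm_eq_zero.mp this.symm
      have : (y : H) ∈ LinearMap.ker (T : H →ₗ[ℂ] H) := hTy
      have hself : (inner ℂ (y : H) (y : H) : ℂ) = 0 := y.2 (y : H) this
      ext1
      exact inner_self_eq_zero.mp hself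
    have hd := Submodule.dense_iff_topologicalClosure_eq_top.mpr htop
    rwa [LinearMap.coe_range] at hd
  · -- range contains T²
    intro x
    set x' : ((LinearMap.ker (T : H →ₗ[ℂ] H))ᗮ : Submodule ℂ H) :=
      Submodule.orthogonalProjectionOnto (LinearMap.ker (T : H →ₗ[ℂ] H))ᗮ x with hx'
    have hsub : x - (x' : H) ∈ LinearMap.ker (T : H →ₗ[ℂ] H) := by
      have h1 : x - (x' : H) ∈ ((LinearMap.ker (T : H →ₗ[ℂ] H))ᗮ)ᗮ :=
        Submodule.sub_starProjection_mem_orthogonal (K := (LinearMap.ker (T : H →ₗ[ℂ] H))ᗮ) x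
      rwa [Submodule.orthogonal_orthogonal] at h1
    have hTx : T (x' : H) = T x := by
      have h0 : T (x - (x' : H)) = 0 := hsub
      rw [map_sub, sub_eq_zero] at h0
      exact h0.symm
    exact ⟨Φ x', by rw [keyC, hTx]⟩
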